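/- Let A be a real m × n matrix, b ∈ ℝᵐ, λ > 0, a > 0, and 0 < μ < 1/‖A‖₂², where ‖A‖₂ is the operator (spectral) norm of A. Define C₁(x) = ‖Ax − b‖₂² + λ P_a(x) and C₂(x, z) = μ(C₁(x) − ‖Ax − Az‖₂²) + ‖x − z‖₂². If x* ≥ 0 is a global minimizer of C₁ over {x ∈ ℝⁿ : x ≥ 0}, then C₂(x*, x*) ≤ C₂(x, x*) for every x ≥ 0; that is, x* is a global minimizer of C₂(·, x*) over {x ∈ ℝⁿ : x ≥ 0}. -/

import Mathlib

open Matrix Filter Topology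

noncomputable def rho (a t : ℝ) : ℝ := a * |t| / (a * |t| + 1)

noncomputable def Pa {n : ℕ} (a : ℝ) (x : Fin n → ℝ) : ℝ := ∑ i, rho a (x i)

open scoped Classical in
noncomputable def l0 {n : ℕ} (x : Fin n → ℝ) : ℕ :=
  (Finset.univ.filter fun i => x i ≠ 0).card

def SOL {m n : ℕ} (A : Matrix (Fin m) (Fin n) ℝ) (b : Fin m → ℝ) : Set (Fin n → ℝ) :=
  {x | A.mulVec x = b ∧ 0 ≤ x}

noncomputable def sqN {n : ℕ} (v : Fin n → ℝ) : ℝ := ∑ i, (v i) ^ 2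

def projPos {n : ℕ} (v : Fin n → ℝ) : Fin n → ℝ := fun i => max 0 (v i)

noncomputable def C1 {m n : ℕ} (A : Matrix (Fin m) (Fin n) ℝ) (b : Fin m → ℝ)
    (lam a : ℝ) (x : Fin n → ℝ) : ℝ :=
  sqN (A.mulVec x - b) + lam * Pa a x

noncomputable def C2 {m n : ℕ} (A : Matrix (Fin m) (Fin n) ℝ) (b : Fin m → ℝ)
    (lam a mu : ℝ) (x z : Fin n → ℝ) : ℝ :=
  mu * (C1 A b lam a x - sqN (A.mulVec x - A.mulVec z)) + sqN (x - z)

noncomputable def Bmu {m n : ℕ} (A : Matrix (Fin m) (Fin n) ℝ) (b : Fin m → ℝ)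
    (mu : ℝ) (z : Fin n → ℝ) : Fin n → ℝ :=
  z + mu • (Aᵀ.mulVec (b - A.mulVec z))


open scoped Matrix.Norms.L2Operator in
lemma key_ineq {m n : ℕ} (A : Matrix (Fin m) (Fin n) ℝ) (mu : ℝ)
    (hmu : 0 < mu) (hmu2 : mu < 1 / ‖A‖ ^ 2) (v : Fin n → ℝ) :
    mu * sqN (A.mulVec v) ≤ sqN v := by
  have hAn : 0 ≤ ‖A‖ := norm_nonneg A
  have hApos : 0 < ‖A‖ := by
    rcases hAn.lt_or_eq with h | h
    · exact h
    · exfalso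
      rw [← h] at hmu2
      simp at hmu2
      linarith
  have hmuA : mu * ‖A‖ ^ 2 ≤ 1 := by
    rw [lt_div_iff₀ (by positivity)] at hmu2
    linarith
  have hsq : ∀ (k : ℕ) (w : Fin k → ℝ),
      sqN w = ‖(WithLp.equiv 2 (Fin k → ℝ)).symm w‖ ^ 2 := by
    intro k w
    rw [EuclideanSpace.norm_eq]
    rw [Real.sq_sqrt (by positivity)]
    unfold sqN
    congr 1
    ext i
    simp [Real.norm_eq_abs, sq_abs]
  set ve : EuclideanSpace ℝ (Fin n) := (WithLp.equiv 2 (Fin n → ℝ)).symm v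
  have hmv : A.mulVec v = A.mulVec ve := rfl
  have hb : ‖(WithLp.equiv 2 (Fin m → ℝ)).symm (A.mulVec ve)‖ ≤ ‖A‖ * ‖ve‖ :=
    A.l2_opNorm_mulVec ve
  rw [hsq m, hsq n, hmv]
  calc mu * ‖(WithLp.equiv 2 (Fin m → ℝ)).symm (A.mulVec ve)‖ ^ 2
      ≤ mu * (‖A‖ * ‖ve‖) ^ 2 := by
        apply mul_le_mul_of_nonneg_left _ hmu.le
        exact pow_le_pow_left₀ (norm_nonneg _) hb 2
    _ = (mu * ‖A‖ ^ 2) * ‖ve‖ ^ 2 := by ring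
    _ ≤ 1 * ‖ve‖ ^ 2 := by
        apply mul_le_mul_of_nonneg_right hmuA (by positivity)
    _ = ‖ve‖ ^ 2 := one_mul _

open scoped Matrix.Norms.L2Operator in
theorem stmt15 {m n : ℕ} (A : Matrix (Fin m) (Fin n) ℝ) (b : Fin m → ℝ)
    (lam a mu : ℝ) (hl : 0 < lam) (ha : 0 < a)
    (hmu : 0 < mu) (hmu2 : mu < 1 / ‖A‖ ^ 2)
    (xstar : Fin n → ℝ) (hxs : 0 ≤ xstar)
    (hmin : ∀ x : Fin n → ℝ, 0 ≤ x → C1 A b lam a xstar ≤ C1 A b lam a x) :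
    ∀ x : Fin n → ℝ, 0 ≤ x →
      C2 A b lam a mu xstar xstar ≤ C2 A b lam a mu x xstar := by
  intro x hx
  have hz : A.mulVec xstar - A.mulVec xstar = 0 := sub_self _
  have h0 : sqN (A.mulVec xstar - A.mulVec xstar) = 0 := by
    rw [hz]; unfold sqN; simp
  have h0' : sqN (xstar - xstar) = 0 := by
    rw [sub_self]; unfold sqN; simp
  have hkey : mu * sqN (A.mulVec x - A.mulVec xstar) ≤ sqN (x - xstar) := by
    rw [← Matrix.mulVec_sub]
    exact key_ineq A mu hmu hmu2 _
  have hC1 := hmin x hx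
  unfold C2
  rw [h0, h0']
  nlinarith [hmu.le]
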